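/- Let G be a DAG, s a vertex, T_s a DFS arborescence rooted at s, s1 a child of s, and u, v ∈ T_{s1} distinct vertices with s ∈ J(u,v). Then there exist internally vertex-disjoint directed paths in G from s to u and from s to v such that all internal vertices of at least one of the two paths lie in T_{s1}. -/

import Mathlib

variable {V : Type*}

/-- A directed graph (given as a relation) is acyclic: no nontrivial closed directed walk. -/
def Acyclic (G : V → V → Prop) : Prop := Irreflexive (Relation.TransGen G)

/-- `l` is a directed path in `G` from `a` to `b`: consecutive vertices are joined by arcs
of `G` and no vertex is repeated. -/
def IsDipath (G : V → V → Prop) (l : List V) (a b : V) : Prop :=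
  l.Chain' G ∧ l.head? = some a ∧ l.getLast? = some b ∧ l.Nodup

/-- The internal vertices of a path (all vertices except the two endpoints). -/
def internalVerts (l : List V) : List V := l.tail.dropLast

/-- `s` is a junction of the pair of distinct vertices `u, v` in `G`: there are directed
paths from `s` to `u` and from `s` to `v` sharing no vertex other than `s`. -/
def IsJunction (G : V → V → Prop) (s u v : V) : Prop :=
  u ≠ v ∧ ∃ p q : List V, IsDipath G p s u ∧ IsDipath G q s v ∧
    ∀ x, x ∈ p → x ∈ q → x = s

/-- `z` is the lowest common ancestor of `u` and `v` in the tree (arborescence) `T`: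
a common ancestor that is a descendant of every common ancestor. -/
def IsTreeLCA (T : V → V → Prop) (u v z : V) : Prop :=
  Relation.ReflTransGen T z u ∧ Relation.ReflTransGen T z v ∧
    ∀ y, Relation.ReflTransGen T y u → Relation.ReflTransGen T y v →
      Relation.ReflTransGen T y z

/-- `s` is a lowest common ancestor of `u, v` in the DAG `G`: a junction of `u, v` such
that there is no directed path from `s` to any other junction of `u, v`. -/
def IsLCA (G : V → V → Prop) (s u v : V) : Prop :=
  IsJunction G s u v ∧
    ∀ s', s' ≠ s → IsJunction G s' u v → ¬ Relation.TransGen G s s'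

/-- A DFS arborescence of `G` rooted at `s`, spanning all descendants of `s`, together
with its post-order numbering and the standard structural properties of depth-first
search: tree arcs are graph arcs, the root has no parent, parents are unique, every
`G`-descendant of `s` is in the tree, `post` is injective on the tree, `post` strictly
decreases from a vertex to its proper tree descendants, the post-order numbers of each
subtree form a contiguous interval, and every graph arc between tree vertices is a
tree/forward arc, a back arc, or a (post-order decreasing) cross arc. -/
structure DFSArborescence (G : V → V → Prop) (s : V) where
  T : V → V → Prop
  post : V → ℕ
  sub : ∀ ⦃a b⦄, T a b → G a b
  root_no_parent : ∀ a, ¬ T a s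
  unique_parent : ∀ ⦃a b c⦄, T a b → T c b → a = c
  verts_reach : ∀ ⦃a b⦄, T a b → Relation.ReflTransGen T s a
  spans : ∀ ⦃v⦄, Relation.ReflTransGen G s v → Relation.ReflTransGen T s v
  post_inj : ∀ ⦃u v⦄, Relation.ReflTransGen T s u → Relation.ReflTransGen T s v →
      post u = post v → u = v
  post_desc : ∀ ⦃u v⦄, Relation.ReflTransGen T s u → Relation.TransGen T u v →
      post v < post u
  post_contig : ∀ ⦃u v x⦄, Relation.ReflTransGen T s u → Relation.ReflTransGen T u v →
      Relation.ReflTransGen T s x → post v ≤ post x → post x ≤ post u →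
      Relation.ReflTransGen T u x
  arc_classify : ∀ ⦃u v⦄, G u v → Relation.ReflTransGen T s u →
      Relation.ReflTransGen T s v →
      Relation.ReflTransGen T u v ∨ Relation.ReflTransGen T v u ∨ post v < post u

private lemma chain'_reach {G : V → V → Prop} :
    ∀ (l : List V), l.Chain' G → ∀ a, l.head? = some a →
      ∀ x ∈ l, Relation.ReflTransGen G a x := by
  intro l
  induction l with
  | nil => simp
  | cons b t ih =>
    intro hc a ha x hx
    simp only [List.head?_cons, Option.some.injEq] at ha
    subst ha
    rcases List.mem_cons.1 hx with rfl | hx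
    · exact .refl
    · match t, hc, hx with
      | c :: t', hc, hx =>
        have h2 := List.isChain_cons_cons.1 hc
        exact Relation.ReflTransGen.head h2.1 (ih h2.2 c rfl x hx)

private lemma chain'_pairwise {G S : V → V → Prop} (hS : Transitive S) :
    ∀ l : List V, l.Chain' G → (∀ a ∈ l, ∀ b ∈ l, G a b → S a b) → l.Pairwise S := by
  intro l
  induction l with
  | nil => simp
  | cons a t ih =>
    intro hc hmem
    match t with
    | [] => simp
    | b :: t' =>
      have hc' := List.isChain_cons_cons.1 hc
      have hp : (b :: t').Pairwise S :=
        ih hc'.2 (fun x hx y hy hxy =>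
          hmem x (List.mem_cons_of_mem _ hx) y (List.mem_cons_of_mem _ hy) hxy)
      have hab : S a b := hmem a List.mem_cons_self b (by simp) hc'.1
      refine List.pairwise_cons.2 ⟨fun c hc0 => ?_, hp⟩
      rcases List.mem_cons.1 hc0 with rfl | hc0
      · exact hab
      · exact hS hab ((List.pairwise_cons.1 hp).1 c hc0)

private lemma pairwise_getLast {R : V → V → Prop} :
    ∀ (l : List V), l.Pairwise R → ∀ v, l.getLast? = some v → ∀ z ∈ l, z = v ∨ R z v := by
  intro l
  induction l with
  | nil => simp
  | cons a t ih =>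
    intro hp v hv z hz
    match t with
    | [] =>
      simp only [List.getLast?_singleton, Option.some.injEq] at hv
      subst hv
      simp at hz
      left; exact hz
    | b :: t' =>
      rw [List.getLast?_cons_cons] at hv
      have hp' := List.pairwise_cons.1 hp
      have hvm : v ∈ b :: t' := by
        obtain ⟨h, rfl⟩ := List.mem_getLast?_eq_getLast hv
        exact List.getLast_mem h
      rcases List.mem_cons.1 hz with rfl | hz
      · right; exact hp'.1 v hvm
      · exact ih hp'.2 v hv z hz

private lemma exists_first {P : V → Prop} :
    ∀ (l : List V), (∃ x ∈ l, P x) →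
      ∃ l₁ a l₂, l = l₁ ++ a :: l₂ ∧ P a ∧ ∀ b ∈ l₁, ¬ P b := by
  intro l
  induction l with
  | nil => simp
  | cons a t ih =>
    intro h
    by_cases ha : P a
    · exact ⟨[], a, t, by simp, ha, by simp⟩
    · obtain ⟨x, hx, hPx⟩ := h
      rcases List.mem_cons.1 hx with rfl | hx
      · exact absurd hPx ha
      · obtain ⟨l₁, c, l₂, hdec, hPc, hnot⟩ := ih ⟨x, hx, hPx⟩
        refine ⟨a :: l₁, c, l₂, by simp [hdec], hPc, ?_⟩
        intro b hb
        rcases List.mem_cons.1 hb with rfl | hb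
        · exact ha
        · exact hnot b hb

private lemma treepath {T : V → V → Prop} {a b : V} (h : Relation.ReflTransGen T a b) :
    ∃ l : List V, l.Chain' T ∧ l.head? = some a ∧ l.getLast? = some b ∧
      ∀ c ∈ l, Relation.ReflTransGen T a c ∧ Relation.ReflTransGen T c b := by
  induction h with
  | refl => exact ⟨[a], List.isChain_singleton a, rfl, rfl, fun c hc => by simp at hc; subst hc; exact ⟨.refl, .refl⟩⟩
  | @tail b c hab hbc ih =>
    obtain ⟨l, hc, hh, hl, hm⟩ := ih
    have hne : l ≠ [] := by rintro rfl; simp at hh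
    refine ⟨l ++ [c], ?_, ?_, ?_, ?_⟩
    · refine List.isChain_append.2 ⟨hc, List.isChain_singleton _, ?_⟩
      intro x hx y hy
      simp only [List.head?_cons, Option.mem_def, Option.some.injEq] at hy
      subst hy
      rw [hl] at hx
      simp only [Option.mem_def, Option.some.injEq] at hx
      subst hx
      exact hbc
    · rw [List.head?_append_of_ne_nil _ hne]; exact hh
    · rw [List.getLast?_append_of_ne_nil _ (by simp)]; rfl
    · intro d hd
      rcases List.mem_append.1 hd with hd | hd
      · exact ⟨(hm d hd).1, (hm d hd).2.tail hbc⟩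
      · simp only [List.mem_singleton] at hd
        subst hd
        exact ⟨hab.tail hbc, .refl⟩

private lemma arc_post {G : V → V → Prop} {s : V} (hG : Acyclic G) (A : DFSArborescence G s)
    {a b : V} (hab : G a b)
    (ha : Relation.ReflTransGen A.T s a) (hb : Relation.ReflTransGen A.T s b) :
    A.post b < A.post a := by
  rcases A.arc_classify hab ha hb with h | h | h
  · rcases Relation.reflTransGen_iff_eq_or_transGen.1 h with rfl | h'
    · exact absurd (Relation.TransGen.single hab) (hG b)
    · exact A.post_desc ha h'
  · rcases Relation.reflTransGen_iff_eq_or_transGen.1 h with rfl | h'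
    · exact absurd (Relation.TransGen.single hab) (hG a)
    · have : Relation.TransGen G b b :=
        (Relation.TransGen.mono (fun _ _ hh => A.sub hh) _ _ h').tail hab
      exact absurd this (hG b)
  · exact h

private lemma key {G : V → V → Prop} {s : V} (hG : Acyclic G) (A : DFSArborescence G s)
    {s1 : V} (h1 : A.T s s1)
    {u v : V} (Su : Relation.ReflTransGen A.T s1 u) (Sv : Relation.ReflTransGen A.T s1 v)
    {p q : List V} (hp : IsDipath G p s u) (hq : IsDipath G q s v)
    (hdisj : ∀ a, a ∈ p → a ∈ q → a = s)
    (p₁ p₂ : List V) (x : V) (hpdec : p = p₁ ++ x :: p₂)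
    (Sx : Relation.ReflTransGen A.T s1 x)
    (hfirst : ∀ b ∈ p₁, ¬ Relation.ReflTransGen A.T s1 b)
    (q₁ q₂ : List V) (y : V) (hqdec : q = q₁ ++ y :: q₂)
    (Sy : Relation.ReflTransGen A.T s1 y)
    (hxy : A.post x < A.post y) :
    ∃ q' : List V, IsDipath G q' s v ∧ (∀ a, a ∈ p → a ∈ q' → a = s) ∧
      ∀ a ∈ internalVerts q', Relation.ReflTransGen A.T s1 a := by
  obtain ⟨hpc, hph, hpl, hpn⟩ := hp
  obtain ⟨hqc, hqh, hql, hqn⟩ := hq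
  have Rp : ∀ a ∈ p, Relation.ReflTransGen A.T s a := fun a ha =>
    A.spans (chain'_reach p hpc s hph a ha)
  have Rq : ∀ a ∈ q, Relation.ReflTransGen A.T s a := fun a ha =>
    A.spans (chain'_reach q hqc s hqh a ha)
  have subT : ∀ {a}, Relation.ReflTransGen A.T s1 a → Relation.ReflTransGen A.T s a :=
    fun h => (Relation.ReflTransGen.single h1).trans h
  have hs1post : ∀ {a}, Relation.ReflTransGen A.T s1 a → A.post a ≤ A.post s1 := by
    intro a h
    rcases Relation.reflTransGen_iff_eq_or_transGen.1 h with rfl | h'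
    · exact le_refl _
    · exact (A.post_desc (Relation.ReflTransGen.single h1) h').le
  have memsub : ∀ {z}, Relation.ReflTransGen A.T s z → A.post v ≤ A.post z →
      A.post z ≤ A.post y → Relation.ReflTransGen A.T s1 z := fun hz h2 h3 =>
    A.post_contig (Relation.ReflTransGen.single h1) Sv hz h2 (h3.trans (hs1post Sy))
  have htrans : Transitive (fun a b : V => A.post b < A.post a) := fun a b c h1 h2 => h2.trans h1
  have Pp : p.Pairwise (fun a b => A.post b < A.post a) :=
    chain'_pairwise htrans p hpc (fun a ha b hb hab => arc_post hG A hab (Rp a ha) (Rp b hb))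
  have Pq : q.Pairwise (fun a b => A.post b < A.post a) :=
    chain'_pairwise htrans q hqc (fun a ha b hb hab => arc_post hG A hab (Rq a ha) (Rq b hb))
  have Pq2 : (y :: q₂).Pairwise (fun a b => A.post b < A.post a) := by
    rw [hqdec] at Pq; exact (List.pairwise_append.1 Pq).2.1
  have hlastq : (y :: q₂).getLast? = some v := by
    rw [hqdec, List.getLast?_append_cons] at hql; exact hql
  have hvle : ∀ z ∈ y :: q₂, A.post v ≤ A.post z := by
    intro z hz
    rcases pairwise_getLast _ Pq2 v hlastq z hz with rfl | h
    · exact le_refl _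
    · exact h.le
  have hzley : ∀ z ∈ y :: q₂, A.post z ≤ A.post y := by
    intro z hz
    rcases List.mem_cons.1 hz with rfl | hz
    · exact le_refl _
    · exact ((List.pairwise_cons.1 Pq2).1 z hz).le
  have hmemq : ∀ z ∈ y :: q₂, z ∈ q := fun z hz => hqdec ▸ List.mem_append_right q₁ hz
  have hSq2 : ∀ z ∈ y :: q₂, Relation.ReflTransGen A.T s1 z := fun z hz =>
    memsub (Rq z (hmemq z hz)) (hvle z hz) (hzley z hz)
  obtain ⟨l, hlc, hlh, hll, hlm⟩ := treepath Sy
  have hlne : l ≠ [] := by rintro rfl; simp at hlh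
  have hlastsl : (s :: l).getLast? = some y := by
    have hsl : s :: l = [s] ++ l := rfl
    rw [hsl, List.getLast?_append_of_ne_nil _ hlne]; exact hll
  have hcyq2 : (y :: q₂).Chain' G := by
    rw [hqdec] at hqc; exact (List.isChain_append.1 hqc).2.1
  have hchain : ((s :: l) ++ q₂).Chain' G := by
    refine List.isChain_append.2 ⟨?_, (List.isChain_cons.1 hcyq2).2, ?_⟩
    · refine List.isChain_cons.2 ⟨?_, hlc.imp (fun a b h => A.sub h)⟩
      intro z hz
      rw [hlh] at hz
      simp only [Option.mem_def, Option.some.injEq] at hz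
      subst hz
      exact A.sub h1
    · intro a ha z hz
      rw [hlastsl] at ha
      simp only [Option.mem_def, Option.some.injEq] at ha
      subst ha
      exact (List.isChain_cons.1 hcyq2).1 z hz
  have RQ' : ∀ a ∈ (s :: l) ++ q₂, Relation.ReflTransGen A.T s a := by
    intro a ha
    rcases List.mem_append.1 ha with ha | ha
    · rcases List.mem_cons.1 ha with rfl | ha
      · exact .refl
      · exact subT (hlm a ha).1
    · exact Rq a (hmemq a (List.mem_cons_of_mem _ ha))
  have Pq' : ((s :: l) ++ q₂).Pairwise (fun a b => A.post b < A.post a) :=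
    chain'_pairwise htrans _ hchain
      (fun a ha b hb hab => arc_post hG A hab (RQ' a ha) (RQ' b hb))
  have hl2 : l.dropLast ++ [y] = l := List.dropLast_append_getLast? y hll
  refine ⟨(s :: l) ++ q₂, ⟨hchain, rfl, ?_, ?_⟩, ?_, ?_⟩
  · -- getLast?
    have heq : (s :: l) ++ q₂ = (s :: l.dropLast) ++ (y :: q₂) := by
      rw [← hl2]; simp
    rw [heq, List.getLast?_append_cons]
    exact hlastq
  · -- Nodup
    exact Pq'.imp (fun {a b} h heq => by subst heq; exact lt_irrefl _ h)
  · -- disjointness with p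
    intro a ha ha'
    rcases List.mem_append.1 ha' with h' | h'
    · rcases List.mem_cons.1 h' with rfl | h'
      · rfl
      · exfalso
        have Sa : Relation.ReflTransGen A.T s1 a := (hlm a h').1
        have hya : A.post y ≤ A.post a := by
          rcases Relation.reflTransGen_iff_eq_or_transGen.1 (hlm a h').2 with rfl | h''
          · exact le_refl _
          · exact (A.post_desc (subT Sa) h'').le
        have hax : A.post a ≤ A.post x := by
          have Pp2 := Pp
          rw [hpdec] at Pp2 ha
          rcases List.mem_append.1 ha with h'' | h''
          · exact absurd Sa (hfirst a h'')
          · rcases List.mem_cons.1 h'' with rfl | h''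
            · exact le_refl _
            · exact ((List.pairwise_cons.1 (List.pairwise_append.1 Pp2).2.1).1 a h'').le
        exact absurd hxy (not_lt.2 (hya.trans hax))
    · exact hdisj a ha (hmemq a (List.mem_cons_of_mem _ h'))
  · -- internal vertices
    intro a ha
    have ha' : a ∈ l ++ q₂ :=
      List.dropLast_subset _ (by simpa [internalVerts] using ha)
    rcases List.mem_append.1 ha' with h' | h'
    · exact (hlm a h').1
    · exact hSq2 a (List.mem_cons_of_mem _ h')


/-- If `s ∈ J(u,v)` with `u, v` in the subarborescence `T_{s1}`, then there are
witnessing internally disjoint paths such that all internal vertices of one of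
them lie in `T_{s1}`. -/
theorem stmt5 (G : V → V → Prop) (hG : Acyclic G) (s : V) (A : DFSArborescence G s)
    (s1 : V) (h1 : A.T s s1) (u v : V)
    (hu : Relation.ReflTransGen A.T s1 u) (hv : Relation.ReflTransGen A.T s1 v)
    (huv : u ≠ v) (hJ : IsJunction G s u v) :
    ∃ p q : List V, IsDipath G p s u ∧ IsDipath G q s v ∧
      (∀ x, x ∈ p → x ∈ q → x = s) ∧
      ((∀ x ∈ internalVerts p, Relation.ReflTransGen A.T s1 x) ∨
       (∀ x ∈ internalVerts q, Relation.ReflTransGen A.T s1 x)) := by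
  obtain ⟨-, p, q, hp, hq, hdisj⟩ := hJ
  have memlast : ∀ (l : List V) (w : V), l.getLast? = some w → w ∈ l := by
    intro l w h
    obtain ⟨hne, rfl⟩ := List.mem_getLast?_eq_getLast h
    exact List.getLast_mem _
  have hup : u ∈ p := memlast p u hp.2.2.1
  have hvq : v ∈ q := memlast q v hq.2.2.1
  obtain ⟨p₁, x, p₂, hpdec, Sx, hfx⟩ := exists_first p ⟨u, hup, hu⟩
  obtain ⟨q₁, y, q₂, hqdec, Sy, hfy⟩ := exists_first q ⟨v, hvq, hv⟩
  have subT : ∀ {a}, Relation.ReflTransGen A.T s1 a → Relation.ReflTransGen A.T s a :=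
    fun h => (Relation.ReflTransGen.single h1).trans h
  have hnS : ¬ Relation.ReflTransGen A.T s1 s := by
    intro h
    exact absurd (A.post_desc Relation.ReflTransGen.refl (Relation.TransGen.head' h1 h))
      (lt_irrefl _)
  have hxyne : x ≠ y := by
    rintro rfl
    have hx := hdisj x (hpdec ▸ List.mem_append_right p₁ List.mem_cons_self)
      (hqdec ▸ List.mem_append_right q₁ List.mem_cons_self)
    exact hnS (hx ▸ Sx)
  rcases lt_trichotomy (A.post x) (A.post y) with h | h | h
  · obtain ⟨q', hq', hd, hint⟩ :=
      key hG A h1 hu hv hp hq hdisj p₁ p₂ x hpdec Sx hfx q₁ q₂ y hqdec Sy h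
    exact ⟨p, q', hp, hq', hd, Or.inr hint⟩
  · exact absurd (A.post_inj (subT Sx) (subT Sy) h) hxyne
  · obtain ⟨p', hp', hd, hint⟩ :=
      key hG A h1 hv hu hq hp (fun a ha hb => hdisj a hb ha) q₁ q₂ y hqdec Sy hfy
        p₁ p₂ x hpdec Sx h
    exact ⟨p', q, hp', hq, fun a ha hb => hd a hb ha, Or.inl hint⟩
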